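/- arXiv:2105.12509 — 2 statements merged into one kernel-verified Lean document; each statement's English description precedes it below -/
import Mathlib

section
/- Let X ⊆ ℤ^d be lattice-convex with finitely many observers. Then rc(X) equals the minimum number k such that there exist sets I_1, ..., I_k ⊆ obs(X) with conv(I_i) ∩ conv(X) = ∅ for each i and obs(X) = I_1 ∪ ... ∪ I_k. -/
/-- Coercion of an integer point to a real point. -/
def toR {d : ℕ} (z : Fin d → ℤ) : Fin d → ℝ := fun i => (z i : ℝ)

/-- The set of observers of `X ⊆ ℤ^d`. -/
def Obs {d : ℕ} (X : Set (Fin d → ℤ)) : Set (Fin d → ℤ) :=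
  {z | z ∉ X ∧ ∀ w : Fin d → ℤ,
    toR w ∈ convexHull ℝ (toR '' insert z X) → w ∈ insert z X}

/-- `Ax ≤ b` is a relaxation of `X`: its integer solutions are exactly `X`. -/
def Relax {d m : ℕ} (X : Set (Fin d → ℤ)) (A : Fin m → Fin d → ℝ)
    (b : Fin m → ℝ) : Prop :=
  ∀ z : Fin d → ℤ, (∀ i, ∑ j, A i j * (z j : ℝ) ≤ b i) ↔ z ∈ X

lemma toR_inj {d : ℕ} : Function.Injective (toR (d := d)) := by
  intro a b h
  funext i
  have h' := congrFun h i
  simp only [toR] at h'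
  exact_mod_cast h'

lemma finite_hull_lattice {d : ℕ} (F : Set (Fin d → ℤ)) (hF : F.Finite) :
    {w : Fin d → ℤ | toR w ∈ convexHull ℝ (toR '' F)}.Finite := by
  rcases F.eq_empty_or_nonempty with rfl | hne
  · simp
  · have hne' : hF.toFinset.Nonempty := by
      simpa [Set.Finite.toFinset_nonempty] using hne
    set lo : Fin d → ℤ := fun j => hF.toFinset.inf' hne' (fun v => v j) with hlo
    set hi : Fin d → ℤ := fun j => hF.toFinset.sup' hne' (fun v => v j) with hhi
    have hsub : convexHull ℝ (toR '' F) ⊆ Set.Icc (toR lo) (toR hi) := by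
      apply convexHull_min _ (convex_Icc _ _)
      rintro x ⟨v, hv, rfl⟩
      constructor
      · intro j
        have h1 : lo j ≤ v j := Finset.inf'_le (fun v => v j) (hF.mem_toFinset.mpr hv)
        show ((lo j : ℝ)) ≤ (v j : ℝ)
        exact_mod_cast h1
      · intro j
        have h1 : v j ≤ hi j := Finset.le_sup' (fun v => v j) (hF.mem_toFinset.mpr hv)
        show ((v j : ℝ)) ≤ (hi j : ℝ)
        exact_mod_cast h1
    apply (Set.finite_Icc lo hi).subset
    intro w hw
    have := hsub hw
    constructor
    · intro j
      have h1 : (lo j : ℝ) ≤ (w j : ℝ) := this.1 j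
      exact_mod_cast h1
    · intro j
      have h1 : (w j : ℝ) ≤ (hi j : ℝ) := this.2 j
      exact_mod_cast h1

lemma not_mutual {d : ℕ} (X : Set (Fin d → ℤ))
    (hX : ∀ z : Fin d → ℤ, toR z ∈ convexHull ℝ (toR '' X) ↔ z ∈ X)
    (o w : Fin d → ℤ) (ho : o ∉ X) (hne : o ≠ w)
    (h1 : toR w ∈ convexHull ℝ (toR '' insert o X))
    (h2 : toR o ∈ convexHull ℝ (toR '' insert w X)) : False := by
  rcases X.eq_empty_or_nonempty with rfl | hXne
  · have himg : toR '' insert o (∅ : Set (Fin d → ℤ)) = {toR o} := by simp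
    rw [himg, convexHull_singleton, Set.mem_singleton_iff] at h1
    exact hne (toR_inj h1.symm)
  have hXne' : (toR '' X).Nonempty := hXne.image _
  rw [Set.image_insert_eq, convexHull_insert hXne', mem_convexJoin] at h1 h2
  obtain ⟨x1, hx1, p, hp, hseg1⟩ := h1
  obtain ⟨x2, hx2, q, hq, hseg2⟩ := h2
  simp only [Set.mem_singleton_iff] at hx1 hx2
  subst hx1; subst hx2
  obtain ⟨a, b, ha, hb, hab, habw⟩ := hseg1
  obtain ⟨c, e, hc, he, hce, hceo⟩ := hseg2
  -- toR w = a • toR o + b • p, toR o = c • toR w + e • q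
  have key : (1 - c * a) • toR o = (c * b) • p + e • q := by
    have h0 : c • (a • toR o + b • p) + e • q = toR o := by rw [habw, hceo]
    rw [smul_add, smul_smul, smul_smul] at h0
    rw [sub_smul, one_smul]
    nth_rewrite 1 [← h0]
    abel
  have hca : c * a ≤ 1 := by nlinarith
  rcases eq_or_lt_of_le hca with heq | hlt
  · -- c * a = 1 forces a = c = 1, b = e = 0, w = o
    have ha1 : a = 1 := by nlinarith
    have hb0 : b = 0 := by linarith
    have : toR w = toR o := by rw [← habw, ha1, hb0]; simp
    exact hne (toR_inj this.symm)
  · have hpos : (0:ℝ) < 1 - c * a := by linarith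
    have hoeq : toR o = (c * b / (1 - c * a)) • p + (e / (1 - c * a)) • q := by
      have h2 : toR o = (1 - c * a)⁻¹ • ((c * b) • p + e • q) := by
        rw [← key, smul_smul, inv_mul_cancel₀ hpos.ne', one_smul]
      rw [h2, smul_add, smul_smul, smul_smul, inv_mul_eq_div, inv_mul_eq_div]
    have hmem : toR o ∈ convexHull ℝ (toR '' X) := by
      rw [hoeq]
      apply (convex_convexHull ℝ _) hp hq
      · positivity
      · positivity
      · field_simp
        linear_combination c * hab + hce
    exact ho ((hX o).mp hmem)

lemma hull_insert_subset {d : ℕ} (X : Set (Fin d → ℤ)) {v w : Fin d → ℤ}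
    (hv : toR v ∈ convexHull ℝ (toR '' insert w X)) :
    convexHull ℝ (toR '' insert v X) ⊆ convexHull ℝ (toR '' insert w X) := by
  apply convexHull_min _ (convex_convexHull _ _)
  rw [Set.image_insert_eq]
  apply Set.insert_subset hv
  apply Set.Subset.trans _ (subset_convexHull _ _)
  rw [Set.image_insert_eq]
  exact Set.subset_insert _ _

lemma exists_observer {d : ℕ} (X : Set (Fin d → ℤ)) (hfin : X.Finite)
    (hX : ∀ z : Fin d → ℤ, toR z ∈ convexHull ℝ (toR '' X) ↔ z ∈ X)
    (z : Fin d → ℤ) (hz : z ∉ X) :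
    ∃ o ∈ Obs X, toR o ∈ convexHull ℝ (toR '' insert z X) := by
  set S : (Fin d → ℤ) → Set (Fin d → ℤ) :=
    fun w => {v | v ∉ X ∧ toR v ∈ convexHull ℝ (toR '' insert w X)} with hS
  have hSfin : ∀ w, (S w).Finite := fun w =>
    (finite_hull_lattice _ (hfin.insert w)).subset (fun v hv => hv.2)
  have hself : ∀ w ∉ X, w ∈ S w := fun w hw =>
    ⟨hw, subset_convexHull _ _ ⟨w, Set.mem_insert _ _, rfl⟩⟩
  have hmono : ∀ {w v}, v ∈ S w → S v ⊆ S w := by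
    intro w v hv u hu
    exact ⟨hu.1, hull_insert_subset X hv.2 hu.2⟩
  set T : Set ℕ := {n | ∃ o ∈ S z, (S o).ncard = n} with hT
  have hTne : T.Nonempty := ⟨(S z).ncard, z, hself z hz, rfl⟩
  obtain ⟨o, hoSz, hocard⟩ := Nat.sInf_mem hTne
  refine ⟨o, ⟨hoSz.1, ?_⟩, hoSz.2⟩
  intro w hwhull
  by_contra hw
  have hwno : w ≠ o := fun h => hw (h ▸ Set.mem_insert _ _)
  have hwnX : w ∉ X := fun h => hw (Set.mem_insert_of_mem _ h)
  have hwSo : w ∈ S o := ⟨hwnX, hwhull⟩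
  have hwSz : w ∈ S z := hmono hoSz hwSo
  have hle : sInf T ≤ (S w).ncard := Nat.sInf_le ⟨w, hwSz, rfl⟩
  rw [← hocard] at hle
  have heq : S w = S o :=
    Set.eq_of_subset_of_ncard_le (hmono hwSo) hle (hSfin o)
  have hoSw : o ∈ S w := heq ▸ (hself o hoSz.1)
  exact not_mutual X hX o w hoSz.1 (Ne.symm hwno) hwhull hoSw.2

lemma sep_lemma {d : ℕ} (Y Z : Set (Fin d → ℝ)) (hY : Y.Finite) (hZ : Z.Finite)
    (hdisj : convexHull ℝ Z ∩ convexHull ℝ Y = ∅) :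
    ∃ (a : Fin d → ℝ) (β : ℝ), (∀ y ∈ convexHull ℝ Y, ∑ j, a j * y j < β) ∧
      (∀ x ∈ convexHull ℝ Z, β < ∑ j, a j * x j) := by
  obtain ⟨f, u, v, hfu, huv, hfv⟩ :=
    geometric_hahn_banach_compact_closed (convex_convexHull ℝ Y)
      (hY.isCompact_convexHull ℝ) (convex_convexHull ℝ Z)
      (hZ.isCompact_convexHull ℝ).isClosed
      (by rw [Set.disjoint_iff_inter_eq_empty, Set.inter_comm]; exact hdisj)
  refine ⟨fun j => f (fun i => if j = i then 1 else 0), u, ?_, ?_⟩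
  · intro y hy
    have hrep := LinearMap.pi_apply_eq_sum_univ (f : (Fin d → ℝ) →ₗ[ℝ] ℝ) y
    simp only [ContinuousLinearMap.coe_coe, smul_eq_mul] at hrep
    calc ∑ j, f (fun i => if j = i then 1 else 0) * y j
        = ∑ j, y j * f (fun i => if j = i then 1 else 0) := by
          exact Finset.sum_congr rfl fun j _ => mul_comm _ _
      _ = f y := hrep.symm
      _ < u := hfu y hy
  · intro x hx
    have hrep := LinearMap.pi_apply_eq_sum_univ (f : (Fin d → ℝ) →ₗ[ℝ] ℝ) x
    simp only [ContinuousLinearMap.coe_coe, smul_eq_mul] at hrep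
    calc u < v := huv
      _ < f x := hfv x hx
      _ = ∑ j, x j * f (fun i => if j = i then 1 else 0) := hrep
      _ = ∑ j, f (fun i => if j = i then 1 else 0) * x j := by
          exact Finset.sum_congr rfl fun j _ => mul_comm _ _

lemma relax_of_cover {d k : ℕ} (X : Set (Fin d → ℤ)) (hfin : X.Finite)
    (hX : ∀ z : Fin d → ℤ, toR z ∈ convexHull ℝ (toR '' X) ↔ z ∈ X)
    (hobs : (Obs X).Finite)
    (I : Fin k → Set (Fin d → ℤ))
    (hI : ∀ i, I i ⊆ Obs X ∧
      convexHull ℝ (toR '' I i) ∩ convexHull ℝ (toR '' X) = ∅)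
    (hcov : Obs X ⊆ ⋃ i, I i) :
    ∃ A : Fin k → Fin d → ℝ, ∃ b : Fin k → ℝ, Relax X A b := by
  have hsep : ∀ i : Fin k, ∃ (a : Fin d → ℝ) (β : ℝ),
      (∀ y ∈ convexHull ℝ (toR '' X), ∑ j, a j * y j < β) ∧
      (∀ x ∈ convexHull ℝ (toR '' I i), β < ∑ j, a j * x j) := by
    intro i
    exact sep_lemma (toR '' X) (toR '' I i) (hfin.image _)
      ((hobs.subset (hI i).1).image _) (hI i).2
  choose A b hA hB using hsep
  refine ⟨A, b, ?_⟩
  intro z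
  constructor
  · intro hall
    by_contra hz
    obtain ⟨o, hoObs, hohull⟩ := exists_observer X hfin hX z hz
    obtain ⟨i, hio⟩ := Set.mem_iUnion.mp (hcov hoObs)
    -- the halfspace ∑ A i j * x j ≤ b i contains conv (insert z X)
    have hhalf : convexHull ℝ (toR '' insert z X) ⊆
        {x : Fin d → ℝ | ∑ j, A i j * x j ≤ b i} := by
      apply convexHull_min _ ?_
      · rintro x ⟨v, hv, rfl⟩
        rcases hv with rfl | hvX
        · exact hall i
        · exact le_of_lt (hA i _ (subset_convexHull ℝ _ ⟨v, hvX, rfl⟩))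
      · intro x hx y hy s t hs ht hst
        simp only [Set.mem_setOf_eq] at *
        have : ∑ j, A i j * (s • x + t • y) j
            = s * ∑ j, A i j * x j + t * ∑ j, A i j * y j := by
          simp only [Pi.add_apply, Pi.smul_apply, smul_eq_mul,
            Finset.mul_sum]
          rw [← Finset.sum_add_distrib]
          exact Finset.sum_congr rfl fun j _ => by ring
        rw [this]
        calc s * ∑ j, A i j * x j + t * ∑ j, A i j * y j
            ≤ s * b i + t * b i := by
              apply add_le_add (mul_le_mul_of_nonneg_left hx hs)
                (mul_le_mul_of_nonneg_left hy ht)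
          _ = b i := by rw [← add_mul, hst, one_mul]
    have h1 : b i < ∑ j, A i j * toR o j :=
      hB i _ (subset_convexHull ℝ _ ⟨o, hio, rfl⟩)
    have h2 : ∑ j, A i j * toR o j ≤ b i := hhalf hohull
    linarith
  · intro hz i
    exact le_of_lt (hA i _ (subset_convexHull ℝ _ ⟨z, hz, rfl⟩))

lemma cover_of_relax {d m : ℕ} (X : Set (Fin d → ℤ))
    (A : Fin m → Fin d → ℝ) (b : Fin m → ℝ) (hR : Relax X A b) :
    ∃ I : Fin m → Set (Fin d → ℤ),
      (∀ i, I i ⊆ Obs X ∧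
        convexHull ℝ (toR '' I i) ∩ convexHull ℝ (toR '' X) = ∅) ∧
      Obs X ⊆ ⋃ i, I i := by
  refine ⟨fun i => {o ∈ Obs X | b i < ∑ j, A i j * (o j : ℝ)}, ?_, ?_⟩
  · intro i
    constructor
    · intro o ho; exact ho.1
    · have hconv : ∀ (c : ℝ) (f : (Fin d → ℝ) → Prop),
          (f = fun x => ∑ j, A i j * x j ≤ c) ∨ (f = fun x => c < ∑ j, A i j * x j) →
          Convex ℝ {x : Fin d → ℝ | f x} := by
        intro c f hf
        intro x hx y hy s t hs ht hst
        have hkey : ∑ j, A i j * (s • x + t • y) j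
            = s * ∑ j, A i j * x j + t * ∑ j, A i j * y j := by
          simp only [Pi.add_apply, Pi.smul_apply, smul_eq_mul, Finset.mul_sum]
          rw [← Finset.sum_add_distrib]
          exact Finset.sum_congr rfl fun j _ => by ring
        rcases hf with rfl | rfl <;> simp only [Set.mem_setOf_eq] at *
        · rw [hkey]
          calc s * ∑ j, A i j * x j + t * ∑ j, A i j * y j
              ≤ s * c + t * c := add_le_add (mul_le_mul_of_nonneg_left hx hs)
                (mul_le_mul_of_nonneg_left hy ht)
            _ = c := by rw [← add_mul, hst, one_mul]
        · rw [hkey]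
          calc c = s * c + t * c := by rw [← add_mul, hst, one_mul]
            _ < s * ∑ j, A i j * x j + t * ∑ j, A i j * y j := by
              rcases eq_or_lt_of_le hs with rfl | hs'
              · simp only [zero_mul, zero_add] at hst ⊢
                rw [hst] at *
                simpa using hy
              · rcases eq_or_lt_of_le ht with rfl | ht'
                · simp only [zero_mul, mul_zero, add_zero, zero_add] at hst ⊢
                  rw [hst]
                  simpa using hx
                · exact add_lt_add (by exact (mul_lt_mul_iff_right₀ hs').mpr hx)
                    ((mul_lt_mul_iff_right₀ ht').mpr hy)
      have hsub1 : convexHull ℝ (toR '' {o ∈ Obs X | b i < ∑ j, A i j * (o j : ℝ)}) ⊆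
          {x : Fin d → ℝ | b i < ∑ j, A i j * x j} := by
        apply convexHull_min _ (hconv (b i) _ (Or.inr rfl))
        rintro x ⟨v, hv, rfl⟩
        exact hv.2
      have hsub2 : convexHull ℝ (toR '' X) ⊆
          {x : Fin d → ℝ | ∑ j, A i j * x j ≤ b i} := by
        apply convexHull_min _ (hconv (b i) _ (Or.inl rfl))
        rintro x ⟨v, hv, rfl⟩
        exact ((hR v).mpr hv) i
      rw [Set.eq_empty_iff_forall_notMem]
      rintro x ⟨hx1, hx2⟩
      have h1 := hsub1 hx1
      have h2 := hsub2 hx2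
      simp only [Set.mem_setOf_eq] at h1 h2
      linarith
  · intro o ho
    have : ¬ (∀ i, ∑ j, A i j * (o j : ℝ) ≤ b i) := fun h => ho.1 ((hR o).mp h)
    push_neg at this
    obtain ⟨i, hi⟩ := this
    exact Set.mem_iUnion.mpr ⟨i, ho, hi⟩

/-- for a lattice-convex `X` with finitely many observers, `rc(X)`
equals the minimum number of subsets of `obs(X)`, each separable from `conv(X)`,
needed to cover `obs(X)`. -/
theorem rc_eq_min_cover (d : ℕ) (X : Set (Fin d → ℤ)) (hfin : X.Finite)
    (hX : ∀ z : Fin d → ℤ, toR z ∈ convexHull ℝ (toR '' X) ↔ z ∈ X)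
    (hobs : (Obs X).Finite) :
    sInf {m : ℕ | ∃ A : Fin m → Fin d → ℝ, ∃ b : Fin m → ℝ, Relax X A b} =
    sInf {k : ℕ | ∃ I : Fin k → Set (Fin d → ℤ),
      (∀ i, I i ⊆ Obs X ∧
        convexHull ℝ (toR '' I i) ∩ convexHull ℝ (toR '' X) = ∅) ∧
      Obs X ⊆ ⋃ i, I i} := by
  set R := {m : ℕ | ∃ A : Fin m → Fin d → ℝ, ∃ b : Fin m → ℝ, Relax X A b} with hR
  set C := {k : ℕ | ∃ I : Fin k → Set (Fin d → ℤ),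
      (∀ i, I i ⊆ Obs X ∧
        convexHull ℝ (toR '' I i) ∩ convexHull ℝ (toR '' X) = ∅) ∧
      Obs X ⊆ ⋃ i, I i} with hC
  -- C is nonempty: cover by singletons
  have hCne : C.Nonempty := by
    refine ⟨hobs.toFinset.card,
      fun i => {((hobs.toFinset.equivFin.symm i : hobs.toFinset) : Fin d → ℤ)}, ?_, ?_⟩
    · intro i
      set o : Fin d → ℤ := ((hobs.toFinset.equivFin.symm i : hobs.toFinset) : Fin d → ℤ)
        with hodef
      have hoObs : o ∈ Obs X := by
        have := (hobs.toFinset.equivFin.symm i).2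
        simpa [hobs.mem_toFinset] using this
      constructor
      · intro v hv
        rw [Set.mem_singleton_iff] at hv
        rw [hv]; exact hoObs
      · rw [Set.image_singleton, convexHull_singleton,
          Set.eq_empty_iff_forall_notMem]
        rintro x ⟨hx1, hx2⟩
        rw [Set.mem_singleton_iff] at hx1
        subst hx1
        exact hoObs.1 ((hX o).mp hx2)
    · intro o ho
      refine Set.mem_iUnion.mpr ⟨hobs.toFinset.equivFin ⟨o, hobs.mem_toFinset.mpr ho⟩, ?_⟩
      simp
  have hRne : R.Nonempty := by
    obtain ⟨k, I, hI, hcov⟩ := hCne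
    obtain ⟨A, b, hr⟩ := relax_of_cover X hfin hX hobs I hI hcov
    exact ⟨k, A, b, hr⟩
  apply le_antisymm
  · obtain ⟨I, hI, hcov⟩ := Nat.sInf_mem hCne
    obtain ⟨A, b, hr⟩ := relax_of_cover X hfin hX hobs I hI hcov
    exact Nat.sInf_le ⟨A, b, hr⟩
  · obtain ⟨A, b, hr⟩ := Nat.sInf_mem hRne
    obtain ⟨I, hI, hcov⟩ := cover_of_relax X A b hr
    exact Nat.sInf_le ⟨I, hI, hcov⟩
end

section
/- Let X ⊆ ℤ^d be lattice-convex and ε > 0. Suppose Q is an ε-relaxation of X, i.e., X + εD ⊆ Q and int(Q) ∩ ℤ^d = X, where εD = {0, ±εe_1, ..., ±εe_d}. Then for every q ∈ Q and v ∈ X, ‖v − q‖_∞ ≤ 2·d!·(|X|+1)/ε^{d−1}. In particular every ε-relaxation of X is bounded and contained in conv(X) + c·[−1,1]^d for c = 2·d!·(|X|+1)/ε^{d−1}. -/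
open MeasureTheory Set Real
open scoped ENNReal Pointwise
set_option maxHeartbeats 1000000

lemma toR_add {d : ℕ} (a b : Fin d → ℤ) : toR (a + b) = toR a + toR b := by
  funext i; simp [toR]

lemma toR_sub {d : ℕ} (a b : Fin d → ℤ) : toR (a - b) = toR a - toR b := by
  funext i; simp [toR]

section aux

/-- The fundamental cell attached to an integer point. -/
def cell {d : ℕ} (g : Fin d → ℤ) : Set (Fin d → ℝ) :=
  Set.pi Set.univ (fun i => Set.Ico (g i : ℝ) (g i + 1))

lemma cell_measurable {d : ℕ} (g : Fin d → ℤ) : MeasurableSet (cell g) :=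
  MeasurableSet.univ_pi (fun _ => measurableSet_Ico)

lemma mem_cell_iff {d : ℕ} (g : Fin d → ℤ) (x : Fin d → ℝ) :
    x ∈ cell g ↔ ∀ i, ⌊x i⌋ = g i := by
  simp only [cell, Set.mem_pi, Set.mem_univ, forall_true_left, Set.mem_Ico]
  refine forall_congr' fun i => ?_
  rw [Int.floor_eq_iff]

lemma cell_volume {d : ℕ} : volume (cell (0 : Fin d → ℤ)) = 1 := by
  rw [cell]
  rw [volume_pi_pi]
  simp [Real.volume_Ico]

lemma blichfeldt_count {d : ℕ} (m : ℕ) (S : Set (Fin d → ℝ)) (hS : MeasurableSet S)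
    (h : (m : ℝ≥0∞) < volume S) :
    ∃ (x : Fin d → ℝ) (G : Finset (Fin d → ℤ)), m < G.card ∧ ∀ g ∈ G, x + toR g ∈ S := by
  classical
  by_contra hcon
  push_neg at hcon
  set A : (Fin d → ℤ) → Set (Fin d → ℝ) :=
    fun g => ((· + toR g) ⁻¹' S) ∩ cell 0 with hA
  have hAmeas : ∀ g, MeasurableSet (A g) :=
    fun g => ((measurable_add_const (toR g)) hS).inter (cell_measurable 0)
  have claim : ∀ x, ∀ F : Finset (Fin d → ℤ), (∀ g ∈ F, x ∈ A g) → F.card ≤ m := by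
    intro x F hF
    by_contra h'
    push_neg at h'
    obtain ⟨g, hg, hgS⟩ := hcon x F h'
    exact hgS (hF g hg).1
  have hdecomp : volume S = ∑' g : Fin d → ℤ, volume (A g) := by
    have hcover : S = ⋃ g : Fin d → ℤ, S ∩ cell g := by
      ext x
      simp only [Set.mem_iUnion]
      constructor
      · intro hx
        exact ⟨fun i => ⌊x i⌋, hx, (mem_cell_iff _ _).2 fun i => rfl⟩
      · rintro ⟨g, hx, -⟩; exact hx
    have hdisj : Pairwise (Function.onFun Disjoint fun g : Fin d → ℤ => S ∩ cell g) := by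
      intro g g' hgg'
      refine Set.disjoint_left.2 ?_
      rintro x ⟨-, hx⟩ ⟨-, hx'⟩
      exact hgg' (funext fun i => ((mem_cell_iff g x).1 hx i).symm.trans
        ((mem_cell_iff g' x).1 hx' i))
    have htrans : ∀ g : Fin d → ℤ, volume (S ∩ cell g) = volume (A g) := by
      intro g
      have hpre : (· + toR g) ⁻¹' (S ∩ cell g) = A g := by
        ext x
        simp only [Set.mem_preimage, Set.mem_inter_iff, hA]
        refine and_congr Iff.rfl ?_
        rw [mem_cell_iff, mem_cell_iff]
        refine forall_congr' fun i => ?_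
        have : (x + toR g) i = x i + (g i : ℝ) := rfl
        rw [this, Int.floor_add_intCast]
        simp only [Pi.zero_apply]
        omega
      rw [← hpre, measure_preimage_add_right]
    calc volume S = volume (⋃ g : Fin d → ℤ, S ∩ cell g) := by rw [← hcover]
      _ = ∑' g : Fin d → ℤ, volume (S ∩ cell g) :=
          measure_iUnion hdisj fun g => hS.inter (cell_measurable g)
      _ = ∑' g : Fin d → ℤ, volume (A g) := by simp_rw [htrans]
  have hbound : ∑' g : Fin d → ℤ, volume (A g) ≤ (m : ℝ≥0∞) := by
    have hpt : ∀ x, ∑' g : Fin d → ℤ, (A g).indicator (fun _ => (1 : ℝ≥0∞)) x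
        ≤ (cell (0 : Fin d → ℤ)).indicator (fun _ => (m : ℝ≥0∞)) x := by
      intro x
      by_cases hx : x ∈ cell (0 : Fin d → ℤ)
      · rw [Set.indicator_of_mem hx]
        rw [ENNReal.tsum_eq_iSup_sum]
        refine iSup_le fun F => ?_
        have : ∑ g ∈ F, (A g).indicator (fun _ => (1 : ℝ≥0∞)) x
            = ((F.filter (fun g => x ∈ A g)).card : ℝ≥0∞) := by
          rw [Finset.card_filter]
          push_cast
          refine Finset.sum_congr rfl fun g _ => ?_
          by_cases hg : x ∈ A g <;> simp [Set.indicator, hg]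
        rw [this]
        exact_mod_cast Nat.cast_le.2 (claim x _ fun g hg => (Finset.mem_filter.1 hg).2)
      · rw [Set.indicator_of_notMem hx]
        have : ∀ g : Fin d → ℤ, (A g).indicator (fun _ => (1 : ℝ≥0∞)) x = 0 := by
          intro g
          refine Set.indicator_of_notMem (fun hxg => hx hxg.2) _
        simp [this]
    calc ∑' g : Fin d → ℤ, volume (A g)
        = ∑' g : Fin d → ℤ, ∫⁻ x, (A g).indicator (fun _ => (1 : ℝ≥0∞)) x := by
          refine tsum_congr fun g => ?_
          exact (lintegral_indicator_one (hAmeas g)).symm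
      _ = ∫⁻ x, ∑' g : Fin d → ℤ, (A g).indicator (fun _ => (1 : ℝ≥0∞)) x := by
          exact (lintegral_tsum fun g => (measurable_one.indicator (hAmeas g)).aemeasurable).symm
      _ ≤ ∫⁻ x, (cell (0 : Fin d → ℤ)).indicator (fun _ => (m : ℝ≥0∞)) x :=
          lintegral_mono hpt
      _ = (m : ℝ≥0∞) * volume (cell (0 : Fin d → ℤ)) := by
          rw [lintegral_indicator_const (cell_measurable 0)]
      _ = (m : ℝ≥0∞) := by rw [cell_volume, mul_one]
  exact absurd h (not_lt.2 (hdecomp ▸ hbound))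

lemma vdCorput_count {d : ℕ} (m : ℕ) (S : Set (Fin d → ℝ)) (hS : MeasurableSet S)
    (hconv : Convex ℝ S) (hsymm : ∀ x ∈ S, -x ∈ S)
    (h : (m : ℝ≥0∞) * 2 ^ d < volume S) :
    ∃ G : Finset (Fin d → ℤ), m < G.card ∧ ∀ g ∈ G, toR g ∈ S := by
  classical
  set S' : Set (Fin d → ℝ) := (2⁻¹ : ℝ) • S with hS'
  have hS'meas : MeasurableSet S' := hS.const_smul₀ (2⁻¹ : ℝ)
  have hvol : volume S' = ((2 : ℝ≥0∞) ^ d)⁻¹ * volume S := by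
    rw [hS', Measure.addHaar_smul_of_nonneg volume (by norm_num : (0:ℝ) ≤ 2⁻¹) S,
      Module.finrank_fintype_fun_eq_card, Fintype.card_fin]
    congr 1
    rw [ENNReal.ofReal_pow (by norm_num), ENNReal.ofReal_inv_of_pos (by norm_num),
      ← ENNReal.inv_pow]
    norm_num
  have h2 : ((2 : ℝ≥0∞) ^ d) ≠ 0 := by positivity
  have h2' : ((2 : ℝ≥0∞) ^ d) ≠ ⊤ := ENNReal.pow_ne_top ENNReal.ofNat_ne_top
  have hmlt : (m : ℝ≥0∞) < volume S' := by
    rw [hvol]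
    have := (ENNReal.mul_lt_mul_iff_right (a := ((2 : ℝ≥0∞) ^ d)⁻¹)
      (ENNReal.inv_ne_zero.2 h2') (ENNReal.inv_ne_top.2 h2)).2 h
    rwa [mul_comm ((m : ℝ≥0∞)) _, ← mul_assoc, ENNReal.inv_mul_cancel h2 h2', one_mul] at this
  obtain ⟨x, G, hcard, hG⟩ := blichfeldt_count m S' hS'meas hmlt
  have hGne : G.Nonempty := Finset.card_pos.1 (by omega)
  obtain ⟨g₀, hg₀⟩ := hGne
  refine ⟨G.image (fun g => g - g₀), ?_, ?_⟩
  · rwa [Finset.card_image_of_injective _ (sub_left_injective)]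
  · intro z hz
    obtain ⟨g, hg, rfl⟩ := Finset.mem_image.1 hz
    obtain ⟨a, ha, hax⟩ := Set.mem_smul_set.1 (hG g hg)
    obtain ⟨b, hb, hbx⟩ := Set.mem_smul_set.1 (hG g₀ hg₀)
    have key : toR (g - g₀) = (2⁻¹ : ℝ) • a + (2⁻¹ : ℝ) • (-b) := by
      have h1 : toR (g - g₀) = (x + toR g) - (x + toR g₀) := by
        funext i
        show ((g i - g₀ i : ℤ) : ℝ) = (x i + (g i : ℝ)) - (x i + (g₀ i : ℝ))
        push_cast
        ring
      rw [h1, ← hax, ← hbx, smul_neg, sub_eq_add_neg]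
    rw [key]
    exact hconv ha (hsymm b hb) (by norm_num) (by norm_num) (by norm_num)

/-- The closed unit crosspolytope. -/
def cross (d : ℕ) : Set (Fin d → ℝ) := {x | ∑ i, |x i| ≤ 1}

lemma cross_convex (d : ℕ) : Convex ℝ (cross d) := by
  intro x hx y hy a b ha hb hab
  simp only [cross, Set.mem_setOf_eq] at *
  calc ∑ i, |(a • x + b • y) i| ≤ ∑ i, (a * |x i| + b * |y i|) := by
        refine Finset.sum_le_sum fun i _ => ?_
        simp only [Pi.add_apply, Pi.smul_apply, smul_eq_mul]
        calc |a * x i + b * y i| ≤ |a * x i| + |b * y i| := abs_add_le _ _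
          _ = a * |x i| + b * |y i| := by rw [abs_mul, abs_mul, abs_of_nonneg ha, abs_of_nonneg hb]
    _ = a * ∑ i, |x i| + b * ∑ i, |y i| := by
        rw [Finset.sum_add_distrib, Finset.mul_sum, Finset.mul_sum]
    _ ≤ a * 1 + b * 1 := by gcongr
    _ = 1 := by linarith

lemma cross_compact (d : ℕ) : IsCompact (cross d) := by
  have hclosed : IsClosed (cross d) :=
    isClosed_le (by continuity) continuous_const
  refine IsCompact.of_isClosed_subset (isCompact_closedBall (0 : Fin d → ℝ) 1) hclosed ?_
  intro x hx
  simp only [Metric.mem_closedBall, dist_zero_right]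
  refine pi_norm_le_iff_of_nonneg zero_le_one |>.2 fun i => ?_
  calc ‖x i‖ = |x i| := rfl
    _ ≤ ∑ j, |x j| := Finset.single_le_sum (fun j _ => abs_nonneg (x j)) (Finset.mem_univ i)
    _ ≤ 1 := hx

lemma cross_volume (d : ℕ) :
    ENNReal.ofReal (2 ^ d / (d.factorial : ℝ)) ≤ volume (cross d) := by
  have hsub : {x : Fin d → ℝ | ∑ i, |x i| ^ (1 : ℝ) < 1} ⊆ cross d := by
    intro x hx
    simp only [Set.mem_setOf_eq, Real.rpow_one] at hx
    exact le_of_lt hx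
  calc ENNReal.ofReal (2 ^ d / (d.factorial : ℝ))
      = volume {x : Fin d → ℝ | ∑ i, |x i| ^ (1 : ℝ) < 1} := by
        rw [MeasureTheory.volume_sum_rpow_lt_one (Fin d) le_rfl]
        congr 1
        rw [Fintype.card_fin]
        norm_num [Real.Gamma_nat_eq_factorial]
    _ ≤ volume (cross d) := measure_mono hsub

/-- The key linear map. -/
noncomputable def Tmap {d : ℕ} (ε : ℝ) (i0 : Fin d) (w : Fin d → ℝ) :
    (Fin d → ℝ) →ₗ[ℝ] (Fin d → ℝ) :=
  (ε • LinearMap.id) + (LinearMap.proj i0).smulRight (w - ε • (Pi.single i0 1 : Fin d → ℝ))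

lemma Tmap_apply {d : ℕ} (ε : ℝ) (i0 : Fin d) (w : Fin d → ℝ) (x : Fin d → ℝ) :
    Tmap ε i0 w x = ε • x + x i0 • (w - ε • (Pi.single i0 1 : Fin d → ℝ)) := by
  simp [Tmap]

lemma Tmap_det {d : ℕ} (hd : 0 < d) (ε : ℝ) (hε : ε ≠ 0) (i0 : Fin d) (w : Fin d → ℝ) :
    LinearMap.det (Tmap ε i0 w) = w i0 * ε ^ (d - 1) := by
  classical
  have hM : LinearMap.toMatrix' (Tmap ε i0 w)
      = (Matrix.diagonal (fun _ : Fin d => ε)).updateCol i0 w := by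
    ext k j
    rw [LinearMap.toMatrix'_apply, Tmap_apply]
    simp only [Pi.add_apply, Pi.smul_apply, Pi.sub_apply, smul_eq_mul,
      Matrix.updateCol_apply, Matrix.diagonal_apply, Pi.single_apply]
    split_ifs <;> subst_vars <;> simp_all <;> try ring
  have hcol : (fun k => ∑ j, ((w j * ε⁻¹) • (Matrix.diagonal (fun _ : Fin d => ε)) k j)) = w := by
    funext k
    simp only [smul_eq_mul, Matrix.diagonal_apply]
    rw [Finset.sum_eq_single k]
    · field_simp; simp
    · intro j _ hj
      simp [hj.symm]
    · simp
  have hdet : LinearMap.det (Tmap ε i0 w)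
      = ((Matrix.diagonal (fun _ : Fin d => ε)).updateCol i0 w).det := by
    rw [← LinearMap.det_toMatrix', hM]
  rw [hdet]
  conv_lhs => rw [← hcol]
  rw [Matrix.det_updateCol_sum, Matrix.det_diagonal]
  simp only [smul_eq_mul, Finset.prod_const, Finset.card_univ, Fintype.card_fin]
  have hpow : ε ^ d = ε * ε ^ (d - 1) := by
    conv_lhs => rw [show d = (d - 1) + 1 by omega]
    ring
  rw [hpow]
  field_simp

end aux

/-- every `ε`-relaxation `Q` (a polyhedron with `X + ε◊ ⊆ Q` and
`int(Q) ∩ ℤ^d = X`) satisfies `‖v − q‖_∞ ≤ 2·d!·(|X|+1)/ε^(d−1)` for all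
`q ∈ Q`, `v ∈ X`; in particular `Q` is bounded. -/
theorem eps_relaxation_bounded (d : ℕ) (hd : 0 < d) (X : Set (Fin d → ℤ))
    (hfin : X.Finite)
    (hX : ∀ z : Fin d → ℤ, toR z ∈ convexHull ℝ (toR '' X) ↔ z ∈ X)
    (hdim : affineSpan ℝ (toR '' X) = ⊤)
    (ε : ℝ) (hε : 0 < ε) (Q : Set (Fin d → ℝ))
    (m : ℕ) (A : Fin m → Fin d → ℝ) (b : Fin m → ℝ)
    (hQ : Q = {x : Fin d → ℝ | ∀ i, ∑ j, A i j * x j ≤ b i})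
    (hin : ∀ v ∈ X, toR v ∈ Q ∧ ∀ i : Fin d,
      toR v + Pi.single i ε ∈ Q ∧ toR v - Pi.single i ε ∈ Q)
    (hrelax : ∀ z : Fin d → ℤ, toR z ∈ interior Q ↔ z ∈ X) :
    ∀ q ∈ Q, ∀ v ∈ X,
      ‖toR v - q‖ ≤ 2 * (d.factorial : ℝ) * (X.ncard + 1) / ε ^ (d - 1) := by
  classical
  intro q hq v hv
  by_contra hcontra
  push_neg at hcontra
  set N := X.ncard with hN
  set vR := toR v with hvR
  set w : Fin d → ℝ := q - vR with hw
  -- pick a coordinate realizing the sup norm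
  have hne : Nonempty (Fin d) := ⟨⟨0, hd⟩⟩
  obtain ⟨i0, -, hi0⟩ := Finset.exists_mem_eq_sup (Finset.univ : Finset (Fin d))
    (Finset.univ_nonempty (α := Fin d)) (fun i => ‖w i‖₊)
  have hnorm : ‖w‖ = |w i0| := by
    rw [Pi.norm_def, hi0]
    rfl
  set R := |w i0| with hR
  have hRlarge : 2 * (d.factorial : ℝ) * (N + 1) / ε ^ (d - 1) < R := by
    rw [← hnorm, hw]
    rw [show q - vR = -(vR - q) by abel, norm_neg]
    exact hcontra
  -- convexity of Q
  have hQconv : Convex ℝ Q := by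
    rw [hQ]
    intro x hx y hy α γ hα hγ hαγ
    intro i
    simp only [Set.mem_setOf_eq] at hx hy ⊢
    have hexp : ∑ j, A i j * ((α • x + γ • y) j)
        = α * ∑ j, A i j * x j + γ * ∑ j, A i j * y j := by
      rw [Finset.mul_sum, Finset.mul_sum, ← Finset.sum_add_distrib]
      refine Finset.sum_congr rfl fun j _ => ?_
      simp only [Pi.add_apply, Pi.smul_apply, smul_eq_mul]
      ring
    rw [hexp]
    calc α * ∑ j, A i j * x j + γ * ∑ j, A i j * y j
        ≤ α * b i + γ * b i := by gcongr; exact hx i; exact hy i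
      _ = b i := by rw [← add_mul, hαγ, one_mul]
  have hvint : vR ∈ interior Q := (hrelax v).2 hv
  -- choice of the shrinking factor t
  have hbpos : (0:ℝ) < (2*N+1)/(2*N+2) := by positivity
  have hblt1 : ((2*N+1:ℝ))/(2*N+2) < 1 := by
    rw [div_lt_one (by positivity)]; linarith
  set t : ℝ := (((2*N+1:ℝ))/(2*N+2)) ^ ((d : ℝ)⁻¹) with ht
  have ht0 : 0 < t := Real.rpow_pos_of_pos hbpos _
  have ht1 : t < 1 := Real.rpow_lt_one (le_of_lt hbpos) hblt1 (by positivity)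
  have htd : t ^ d = (2*N+1)/(2*N+2) := by
    rw [ht, ← Real.rpow_natCast ((((2*N+1:ℝ))/(2*N+2)) ^ ((d : ℝ)⁻¹)) d,
      ← Real.rpow_mul (le_of_lt hbpos), inv_mul_cancel₀ (by exact_mod_cast hd.ne' : (d:ℝ) ≠ 0),
      Real.rpow_one]
  -- the symmetric convex body
  set T := Tmap ε i0 w with hT
  set S : Set (Fin d → ℝ) := T '' (t • cross d) with hS
  have hTcont : Continuous T := T.continuous_of_finiteDimensional
  have hScompact : IsCompact S := (((cross_compact d).smul t)).image hTcont
  have hSmeas : MeasurableSet S := hScompact.isClosed.measurableSet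
  have hSconv : Convex ℝ S := ((cross_convex d).smul t).linear_image T
  have hSsymm : ∀ x ∈ S, -x ∈ S := by
    rintro _ ⟨u, hu, rfl⟩
    obtain ⟨x0, hx0, rfl⟩ := Set.mem_smul_set.1 hu
    refine ⟨t • (-x0), Set.smul_mem_smul_set ?_, by rw [smul_neg, LinearMap.map_neg]⟩
    simpa only [cross, Set.mem_setOf_eq, Pi.neg_apply, abs_neg] using hx0
  -- the volume bound
  have hvolS : ((2*N : ℕ) : ℝ≥0∞) * 2 ^ d < volume S := by
    have h1 : volume S = ENNReal.ofReal (R * ε ^ (d-1)) * volume (t • cross d) := by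
      rw [hS, Measure.addHaar_image_linearMap, hT, Tmap_det hd ε (ne_of_gt hε) i0 w]
      congr 2
      rw [abs_mul, abs_of_nonneg (pow_nonneg (le_of_lt hε) _), ← hR, mul_comm]
    have h2 : volume (t • cross d) = ENNReal.ofReal (t ^ d) * volume (cross d) := by
      rw [Measure.addHaar_smul_of_nonneg volume (le_of_lt ht0),
        Module.finrank_fintype_fun_eq_card, Fintype.card_fin]
    have hR0 : (0:ℝ) ≤ R := abs_nonneg _
    have hprod1 : (0:ℝ) ≤ R * ε^(d-1) := mul_nonneg hR0 (pow_nonneg hε.le _)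
    have h3 : ENNReal.ofReal ((R * ε^(d-1)) * (t^d * (2^d / (d.factorial : ℝ)))) ≤ volume S := by
      rw [h1, h2, ← mul_assoc, ← mul_assoc, ← ENNReal.ofReal_mul hprod1,
        ENNReal.ofReal_mul (mul_nonneg hprod1 (pow_nonneg ht0.le _))]
      exact mul_le_mul_right (cross_volume d) _
    refine lt_of_lt_of_le ?_ h3
    have hreal : ((2*N : ℕ) : ℝ) * 2 ^ d < (R * ε^(d-1)) * (t^d * (2^d / (d.factorial : ℝ))) := by
      push_cast
      rw [htd]
      have hC : (d.factorial:ℝ) * (2*N+2) < R * ε^(d-1) := by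
        rw [div_lt_iff₀ (by positivity : (0:ℝ) < ε ^ (d-1))] at hRlarge
        nlinarith [hRlarge]
      have hpos1 : (0:ℝ) < (2*N+1)/(2*N+2) * (2^d / (d.factorial : ℝ)) := by positivity
      have hstep : ((d.factorial:ℝ) * (2*N+2)) * ((2*N+1)/(2*N+2) * (2^d / (d.factorial:ℝ)))
          = (2*N+1) * 2^d := by
        field_simp
      have h2pos : (0:ℝ) < 2^d := by positivity
      calc (2*(N:ℝ)) * 2 ^ d < (2*(N:ℝ)+1) * 2^d := by nlinarith
        _ = ((d.factorial:ℝ) * (2*N+2)) * ((2*N+1)/(2*N+2) * (2^d / (d.factorial:ℝ))) :=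
            hstep.symm
        _ < (R * ε^(d-1)) * ((2*N+1)/(2*N+2) * (2^d / (d.factorial:ℝ))) :=
            mul_lt_mul_of_pos_right hC hpos1
    calc ((2*N : ℕ) : ℝ≥0∞) * 2 ^ d
        = ENNReal.ofReal (((2*N : ℕ) : ℝ) * 2 ^ d) := by
          rw [ENNReal.ofReal_mul (by positivity), ENNReal.ofReal_natCast,
            ENNReal.ofReal_pow (by norm_num)]
          norm_num
      _ < ENNReal.ofReal ((R * ε^(d-1)) * (t^d * (2^d / (d.factorial : ℝ)))) := by
          refine (ENNReal.ofReal_lt_ofReal_iff_of_nonneg (by positivity)).2 hreal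
  -- extract 2N+1 lattice points
  obtain ⟨G, hGcard, hGmem⟩ := vdCorput_count (2*N) S hSmeas hSconv hSsymm hvolS
  -- the key geometric fact
  have key : ∀ x : Fin d → ℝ, x ∈ cross d → 0 ≤ x i0 → vR + T (t • x) ∈ interior Q := by
    intro x hx hxpos
    set s : ℝ := x i0 with hs
    set y : Fin d → ℝ := x - s • (Pi.single i0 1 : Fin d → ℝ) with hy
    have hTx : T (t • x) = (t * s) • w + (t * ε) • y := by
      rw [hT, LinearMap.map_smul, Tmap_apply, hy]
      module
    have hs1 : s ≤ 1 := by
      calc s ≤ |x i0| := le_abs_self _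
        _ ≤ ∑ j, |x j| := Finset.single_le_sum (fun j _ => abs_nonneg (x j)) (Finset.mem_univ i0)
        _ ≤ 1 := hx
    have hyi0 : y i0 = 0 := by simp [hy, hs]
    have hyj : ∀ j, j ≠ i0 → y j = x j := by
      intro j hj
      simp [hy, Pi.single_apply, hj]
    have hysum : ∑ j, |y j| ≤ 1 - s := by
      have h1 : ∑ j, |y j| = ∑ j ∈ Finset.univ.erase i0, |x j| := by
        rw [← Finset.sum_erase _ (by rw [hyi0]; simp)]
        exact Finset.sum_congr rfl fun j hj => by rw [hyj j (Finset.ne_of_mem_erase hj)]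
      have h2 : ∑ j ∈ Finset.univ.erase i0, |x j| = (∑ j, |x j|) - |x i0| := by
        rw [← Finset.add_sum_erase _ _ (Finset.mem_univ i0)]
        ring
      rw [h1, h2, abs_of_nonneg hxpos]
      have h3 : ∑ j, |x j| ≤ 1 := hx
      linarith
    have hynonneg : (0:ℝ) ≤ ∑ j, |y j| := Finset.sum_nonneg fun j _ => abs_nonneg _
    set β : ℝ := t * (s + ∑ j, |y j|) with hβ
    have hβ0 : 0 ≤ β := by
      apply mul_nonneg (le_of_lt ht0)
      linarith
    have hβt : β ≤ t := by
      rw [hβ]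
      nlinarith
    have hβ1 : β < 1 := lt_of_le_of_lt hβt ht1
    rcases eq_or_lt_of_le hβ0 with hβeq | hβpos
    · -- degenerate case : the point is vR itself
      have hsum0 : s + ∑ j, |y j| = 0 := by
        rcases mul_eq_zero.1 hβeq.symm with h | h
        · exact absurd h (ne_of_gt ht0)
        · exact h
      have hs0 : s = 0 := by linarith [hynonneg, hxpos]
      have hy0 : y = 0 := by
        funext j
        have : |y j| ≤ ∑ k, |y k| :=
          Finset.single_le_sum (fun k _ => abs_nonneg (y k)) (Finset.mem_univ j)
        have hyle : ∑ k, |y k| ≤ 0 := by linarith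
        have := abs_nonneg (y j)
        have : |y j| = 0 := le_antisymm (by linarith) (abs_nonneg _)
        exact abs_eq_zero.1 this
      rw [hTx, hs0, hy0]
      simpa using hvint
    · -- main case : convex combination
      set c : Option (Fin d) → ℝ := fun o => Option.rec (t*s) (fun j => t * |y j|) o with hc
      set P : Option (Fin d) → (Fin d → ℝ) := fun o => Option.rec q
        (fun j => vR + (if 0 ≤ y j then ε else -ε) • (Pi.single j 1 : Fin d → ℝ)) o with hP
      have hcnonneg : ∀ o, 0 ≤ c o := by
        rintro (_ | j)
        · exact mul_nonneg (le_of_lt ht0) hxpos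
        · exact mul_nonneg (le_of_lt ht0) (abs_nonneg _)
      have hcsum : ∑ o : Option (Fin d), c o = β := by
        rw [Fintype.sum_option]
        show t * s + ∑ j, t * |y j| = t * (s + ∑ j, |y j|)
        rw [mul_add, Finset.mul_sum]
      have hPmem : ∀ o, P o ∈ Q := by
        rintro (_ | j)
        · exact hq
        · show vR + (if 0 ≤ y j then ε else -ε) • (Pi.single j 1 : Fin d → ℝ) ∈ Q
          have hsingle : ∀ r : ℝ, r • (Pi.single j 1 : Fin d → ℝ) = Pi.single j r := by
            intro r
            funext k
            simp [Pi.single_apply]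
          by_cases hyj0 : 0 ≤ y j
          · rw [if_pos hyj0, hsingle]
            exact ((hin v hv).2 j).1
          · rw [if_neg hyj0, hsingle]
            have : vR + Pi.single j (-ε) = vR - Pi.single j ε := by
              funext k
              simp [Pi.single_apply]
              split_ifs <;> ring
            rw [this]
            exact ((hin v hv).2 j).2
      set p : Fin d → ℝ := ∑ o : Option (Fin d), (β⁻¹ * c o) • P o with hpdef
      have hpQ : p ∈ Q := by
        refine hQconv.sum_mem (fun o _ => mul_nonneg (by positivity) (hcnonneg o)) ?_
          (fun o _ => hPmem o)
        rw [← Finset.mul_sum, hcsum, inv_mul_cancel₀ (ne_of_gt hβpos)]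
      have hsum2 : ∑ o : Option (Fin d), c o • P o
          = β • vR + (t*s) • w + (t*ε) • y := by
        rw [Fintype.sum_option]
        have h3 : ∀ j, c (some j) • P (some j)
            = (t * |y j|) • vR + (t * ε * y j) • (Pi.single j 1 : Fin d → ℝ) := by
          intro j
          show (t * |y j|) • (vR + (if 0 ≤ y j then ε else -ε) • (Pi.single j 1 : Fin d → ℝ)) = _
          rcases le_or_gt 0 (y j) with hyy | hyy
          · rw [if_pos hyy, abs_of_nonneg hyy]
            rw [smul_add, smul_smul]
            ring_nf
          · rw [if_neg (not_le.2 hyy), abs_of_neg hyy]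
            rw [smul_add, smul_smul]
            ring_nf
        rw [Finset.sum_congr rfl (fun j _ => h3 j), Finset.sum_add_distrib]
        have h4 : ∑ j, (t * |y j|) • vR = (t * ∑ j, |y j|) • vR := by
          rw [← Finset.sum_smul, Finset.mul_sum]
        have h5 : ∑ j, (t * ε * y j) • (Pi.single j 1 : Fin d → ℝ) = (t*ε) • y := by
          have h5a : ∀ j, (t * ε * y j) • (Pi.single j 1 : Fin d → ℝ)
              = (t*ε) • (Pi.single j (y j) : Fin d → ℝ) := by
            intro j
            funext k
            simp only [Pi.smul_apply, Pi.single_apply, smul_eq_mul]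
            split_ifs <;> ring
          simp_rw [h5a, ← Finset.smul_sum]
          congr 1
          exact Finset.univ_sum_single y
        rw [h4, h5]
        show (t*s) • q + _ = _
        have hq' : q = vR + w := by rw [hw]; abel
        rw [hq', hβ]
        module
      have hβp : β • p = β • vR + (t * s) • w + (t * ε) • y := by
        have : β • p = ∑ o : Option (Fin d), c o • P o := by
          rw [hpdef, Finset.smul_sum]
          refine Finset.sum_congr rfl fun o _ => ?_
          rw [smul_smul, ← mul_assoc, mul_inv_cancel₀ (ne_of_gt hβpos), one_mul]
        rw [this, hsum2]
      have hfinal : vR + T (t • x) = (1 - β) • vR + β • p := by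
        rw [hβp, hTx]
        module
      rw [hfinal]
      exact hQconv.combo_interior_self_mem_interior hvint hpQ (by linarith) hβ0 (by ring)
  -- membership of the lattice points
  have hmem : ∀ g ∈ G, v + g ∈ X ∨ v - g ∈ X := by
    intro g hg
    obtain ⟨u, hu, hTu⟩ := hGmem g hg
    obtain ⟨x0, hx0, rfl⟩ := Set.mem_smul_set.1 hu
    rcases le_or_gt 0 (x0 i0) with hpos | hneg
    · left
      have h1 := key x0 hx0 hpos
      rw [hTu] at h1
      have h2 : toR (v + g) ∈ interior Q := by rw [toR_add, ← hvR]; exact h1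
      exact (hrelax _).1 h2
    · right
      have hx0' : -x0 ∈ cross d := by
        simpa only [cross, Set.mem_setOf_eq, Pi.neg_apply, abs_neg] using hx0
      have h1 := key (-x0) hx0' (by simpa using le_of_lt hneg)
      rw [smul_neg, LinearMap.map_neg, hTu] at h1
      have h2 : toR (v - g) ∈ interior Q := by
        rw [toR_sub, ← hvR, sub_eq_add_neg]
        exact h1
      exact (hrelax _).1 h2
  -- counting argument
  set φ : (Fin d → ℤ) → (Fin d → ℤ) := fun g => if v + g ∈ X then v + g else v - g with hφ
  have hφX : ∀ g ∈ G, φ g ∈ hfin.toFinset := by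
    intro g hg
    rcases hmem g hg with h | h
    · simp only [hφ, if_pos h, Set.Finite.mem_toFinset]; exact h
    · by_cases hc : v + g ∈ X
      · simp only [hφ, if_pos hc, Set.Finite.mem_toFinset]; exact hc
      · simp only [hφ, if_neg hc, Set.Finite.mem_toFinset]; exact h
  have hcount : G.card ≤ 2 * hfin.toFinset.card := by
    refine Finset.card_le_mul_card_image_of_maps_to hφX 2 ?_
    intro a _
    have hsub : G.filter (fun g => φ g = a) ⊆ ({a - v, v - a} : Finset (Fin d → ℤ)) := by
      intro g hg
      have h1 := (Finset.mem_filter.1 hg).2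
      simp only [hφ] at h1
      by_cases hc : v + g ∈ X
      · rw [if_pos hc] at h1
        have : g = a - v := by rw [← h1]; abel
        simp [this]
      · rw [if_neg hc] at h1
        have : g = v - a := by rw [← h1]; abel
        simp [this]
    calc (G.filter (fun g => φ g = a)).card
        ≤ ({a - v, v - a} : Finset (Fin d → ℤ)).card := Finset.card_le_card hsub
      _ ≤ 2 := Finset.card_insert_le _ _ |>.trans (by simp)
  have hNcard : hfin.toFinset.card = N := by rw [hN]; exact (Set.ncard_eq_toFinset_card _ hfin).symm
  omega
end
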